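/- The map (t, y) ↦ (z, w) with z = (-t² - 2t + 1)/(t² + 1) and w = (-t² + 2t + 1)y/(t² + 1)³ sends points of the affine curve y² = (t²+1)(t⁶ + 4t⁵ + 11t⁴ - 8t³ - 5t² + 4t + 1) to points of the affine curve w² = (z² - 2)(z³ - z - 1). -/

import Mathlib

/-- The map `(t, y) ↦ (z, w)` with `z = (-t² - 2t + 1)/(t² + 1)` and
`w = (-t² + 2t + 1) y/(t² + 1)³` sends points of the genus-3 curve
`y² = (t²+1)(t⁶ + 4t⁵ + 11t⁴ - 8t³ - 5t² + 4t + 1)` to points of the genus-2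
curve `w² = (z² - 2)(z³ - z - 1)`. -/
theorem stmt_19 (t y : ℚ)
    (h : y ^ 2 = (t ^ 2 + 1) * (t ^ 6 + 4 * t ^ 5 + 11 * t ^ 4 - 8 * t ^ 3
      - 5 * t ^ 2 + 4 * t + 1)) :
    let z : ℚ := (-t ^ 2 - 2 * t + 1) / (t ^ 2 + 1)
    let w : ℚ := (-t ^ 2 + 2 * t + 1) * y / (t ^ 2 + 1) ^ 3
    w ^ 2 = (z ^ 2 - 2) * (z ^ 3 - z - 1) := by
  intro z w
  have ht : (t ^ 2 + 1) ≠ 0 := by positivity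
  show _ = _
  simp only [z, w]
  field_simp [z, w]
  linear_combination ((-t^2+2*t+1)^2) * h
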